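/- The Choi matrix B with entries B = (1/2)[[1+x₃,0,0,x₁+x₂],[0,1-x₃,x₁-x₂,0],[0,x₁-x₂,1-x₃,0],[x₁+x₂,0,0,1+x₃]] is positive semidefinite if and only if |1+x₃| ≥ |x₁+x₂| and |1-x₃| ≥ |x₁-x₂| (for real x₁,x₂,x₃ with |x_i| ≤ 1). -/

import Mathlib

theorem choi_posSemidef_iff (x₁ x₂ x₃ : ℝ)
    (h1 : |x₁| ≤ 1) (h2 : |x₂| ≤ 1) (h3 : |x₃| ≤ 1) :
    let B : Matrix (Fin 4) (Fin 4) ℝ :=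
      (1/2 : ℝ) • !![1 + x₃, 0, 0, x₁ + x₂;
                     0, 1 - x₃, x₁ - x₂, 0;
                     0, x₁ - x₂, 1 - x₃, 0;
                     x₁ + x₂, 0, 0, 1 + x₃]
    B.PosSemidef ↔ (|x₁ + x₂| ≤ |1 + x₃| ∧ |x₁ - x₂| ≤ |1 - x₃|) := by
  intro B
  rw [Matrix.posSemidef_iff_dotProduct_mulVec]
  have hp : (0:ℝ) ≤ 1 + x₃ := by cases abs_le.mp h3; linarith
  have hm : (0:ℝ) ≤ 1 - x₃ := by cases abs_le.mp h3; linarith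
  rw [abs_of_nonneg hp, abs_of_nonneg hm]
  constructor
  · rintro ⟨-, hq⟩

    constructor
    · rw [abs_le]
      constructor
      · have := hq ![1,0,0,1]
        simp [B, Matrix.mulVec, dotProduct, Fin.sum_univ_four] at this
        linarith
      · have := hq ![1,0,0,-1]
        simp [B, Matrix.mulVec, dotProduct, Fin.sum_univ_four] at this
        linarith
    · rw [abs_le]
      constructor
      · have := hq ![0,1,1,0]
        simp [B, Matrix.mulVec, dotProduct, Fin.sum_univ_four] at this
        linarith
      · have := hq ![0,1,-1,0]
        simp [B, Matrix.mulVec, dotProduct, Fin.sum_univ_four] at this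
        linarith
  · rintro ⟨ha, hb⟩
    obtain ⟨ha1, ha2⟩ := abs_le.mp ha
    obtain ⟨hb1, hb2⟩ := abs_le.mp hb
    constructor
    · show B.conjTranspose = B
      ext i j
      fin_cases i <;> fin_cases j <;>
        simp [B, Matrix.conjTranspose_apply]
    · intro v
      have e0 := sq_nonneg (v 0 - v 3)
      have e1 := sq_nonneg (v 0 + v 3)
      have e2 := sq_nonneg (v 1 - v 2)
      have e3 := sq_nonneg (v 1 + v 2)
      simp [B, Matrix.mulVec, dotProduct, Fin.sum_univ_four]
      nlinarith [sq_nonneg (v 0), sq_nonneg (v 3), sq_nonneg (v 1), sq_nonneg (v 2), mul_nonneg (sub_nonneg.mpr ha2) e0, mul_nonneg (sub_nonneg.mpr (by linarith : -(x₁+x₂) ≤ 1+x₃)) e1, mul_nonneg (sub_nonneg.mpr hb2) e2, mul_nonneg (sub_nonneg.mpr (by linarith : -(x₁-x₂) ≤ 1-x₃)) e3]
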